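/- Let N = 4L+1 and u_n(k) = S(3L+n+k) S(3L+n-k) for k ∈ {-2L,...,2L}. Then u_n(k) = N·2^{L+n} ∏_{j=L-n+1}^{2L} (cos(2πk/N) - cos(2πj/N)) for all -L ≤ n ≤ L and k ∈ {-2L,...,2L}. -/

import Mathlib

open scoped Real BigOperators

/-- `S N k = ∏_{j=1}^{k} 2 sin(π j / N)`, with `S N 0 = 1` (empty product);
note `S N k = 0` for `k ≥ N`. -/
noncomputable def S (N : ℕ) (k : ℕ) : ℝ :=
  ∏ j ∈ Finset.Icc 1 k, 2 * Real.sin (Real.pi * j / N)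

/-- The index set `I_N = {-M+1, ..., -M+N}` with `M = ⌊(N+1)/2⌋`.
For `N = 4L+1` this is `{-2L, ..., 2L}`. -/
noncomputable def Iset (N : ℕ) : Finset ℤ :=
  Finset.Icc (1 - (((N + 1) / 2 : ℕ) : ℤ)) ((N : ℤ) - (((N + 1) / 2 : ℕ) : ℤ))

/-- The centered discrete Fourier transform. -/
noncomputable def dft (N : ℕ) (u : ℤ → ℂ) (l : ℤ) : ℂ :=
  (Real.sqrt N : ℂ)⁻¹ *
    ∑ k ∈ Iset N, Complex.exp (-2 * Real.pi * Complex.I * k * l / N) * u k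

/-- The even vectors `u_n(k) = S(3L+n+k) S(3L+n-k)` (for `N = 4L+1`). -/
noncomputable def uvec (L : ℕ) (n k : ℤ) : ℝ :=
  S (4 * L + 1) (3 * L + n + k).toNat * S (4 * L + 1) (3 * L + n - k).toNat

/-- The odd vectors `v_n(k) = sin(2πk/N) S(3L+n+k) S(3L+n-k)` (for `N = 4L+1`). -/
noncomputable def vvec (L : ℕ) (n k : ℤ) : ℝ :=
  Real.sin (2 * Real.pi * k / (4 * L + 1)) * uvec L n k

lemma abs_one_sub_exp (θ : ℝ) (h0 : 0 ≤ θ) (h2 : θ ≤ 2 * Real.pi) :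
    ‖1 - Complex.exp (θ * Complex.I)‖ = 2 * Real.sin (θ / 2) := by
  have hsin : 0 ≤ Real.sin (θ / 2) :=
    Real.sin_nonneg_of_nonneg_of_le_pi (by linarith) (by linarith [Real.pi_pos])
  have hcos : Real.cos θ = 1 - 2 * Real.sin (θ / 2) ^ 2 := by
    have h := Real.cos_two_mul (θ / 2)
    rw [show 2 * (θ / 2) = θ by ring, Real.cos_sq'] at h
    linarith
  rw [Complex.exp_mul_I]
  have : (1 : ℂ) - (Complex.cos θ + Complex.sin θ * Complex.I)
      = Complex.ofReal (1 - Real.cos θ) + Complex.ofReal (-Real.sin θ) * Complex.I := by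
    push_cast [Complex.ofReal_cos, Complex.ofReal_sin]
    ring
  rw [this, Complex.norm_add_mul_I]
  rw [show (1 - Real.cos θ) ^ 2 + (-Real.sin θ) ^ 2 = (2 * Real.sin (θ / 2)) ^ 2 by
    nlinarith [Real.sin_sq_add_cos_sq θ]]
  exact Real.sqrt_sq (by linarith)

lemma key_prod (N : ℕ) (hN : 0 < N) :
    ∏ j ∈ Finset.Icc 1 (N - 1), (2 * Real.sin (Real.pi * j / N)) = N := by
  set ζ : ℂ := Complex.exp (2 * Real.pi * Complex.I / N) with hζdef
  have hζ : IsPrimitiveRoot ζ N := Complex.isPrimitiveRoot_exp N hN.ne'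
  have hinj : ∀ i ∈ Finset.range N, ∀ j ∈ Finset.range N, ζ ^ i = ζ ^ j → i = j := by
    intro i hi j hj h
    exact hζ.pow_inj (Finset.mem_range.1 hi) (Finset.mem_range.1 hj) h
  have himg : Polynomial.nthRootsFinset N (1 : ℂ) = (Finset.range N).image (ζ ^ ·) := by
    refine (Finset.eq_of_subset_of_card_le ?_ ?_).symm
    · intro x hx
      simp only [Finset.mem_image, Finset.mem_range] at hx
      obtain ⟨j, hj, rfl⟩ := hx
      refine (Polynomial.mem_nthRootsFinset hN 1).2 ?_
      rw [← pow_mul, mul_comm, pow_mul, hζ.pow_eq_one, one_pow]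
    · rw [hζ.card_nthRootsFinset, Finset.card_image_of_injOn (by
        intro a ha b hb h; exact hinj a ha b hb h), Finset.card_range]
  have hprod : ∀ t : ℂ, ∏ j ∈ Finset.range N, (t - ζ ^ j) = t ^ N - 1 := by
    intro t
    have h := congrArg (Polynomial.eval t) (Polynomial.X_pow_sub_one_eq_prod hN hζ)
    simp only [Polynomial.eval_sub, Polynomial.eval_pow, Polynomial.eval_X,
      Polynomial.eval_one, Polynomial.eval_prod, Polynomial.eval_C, himg,
      Finset.prod_image hinj] at h
    exact h.symm
  have hIco : Finset.Icc 1 (N - 1) = Finset.Ico 1 N := by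
    rw [← Finset.Ico_add_one_right_eq_Icc]
    congr 1
    omega
  have hsplit : ∀ t : ℂ, ∏ j ∈ Finset.range N, (t - ζ ^ j)
      = (t - 1) * ∏ j ∈ Finset.Icc 1 (N - 1), (t - ζ ^ j) := by
    intro t
    rw [Finset.range_eq_Ico, Finset.prod_eq_prod_Ico_succ_bot hN, pow_zero, hIco]
  have hgeom : ∀ t : ℂ, t ≠ 1 →
      ∏ j ∈ Finset.Icc 1 (N - 1), (t - ζ ^ j) = ∑ i ∈ Finset.range N, t ^ i := by
    intro t ht
    have hne : t - 1 ≠ 0 := sub_ne_zero.2 ht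
    apply mul_left_cancel₀ hne
    rw [← hsplit, hprod, ← geom_sum_mul, mul_comm]
  have hone : ∏ j ∈ Finset.Icc 1 (N - 1), ((1 : ℂ) - ζ ^ j) = N := by
    have hc1 : Continuous fun t : ℂ => ∏ j ∈ Finset.Icc 1 (N - 1), (t - ζ ^ j) :=
      continuous_finset_prod _ fun j _ => continuous_id.sub continuous_const
    have hc2 : Continuous fun t : ℂ => ∑ i ∈ Finset.range N, t ^ i :=
      continuous_finset_sum _ fun i _ => continuous_pow i
    have heq := Continuous.ext_on (dense_compl_singleton (1 : ℂ)) hc1 hc2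
      (fun t ht => hgeom t ht)
    have h1 := congrFun heq 1
    simpa using h1
  have habs := congrArg (‖·‖) hone
  rw [norm_prod] at habs
  have hfin : ∀ j ∈ Finset.Icc 1 (N - 1),
      ‖1 - ζ ^ j‖ = 2 * Real.sin (Real.pi * j / N) := by
    intro j hj
    rw [Finset.mem_Icc] at hj
    have hjN : (j : ℝ) < N := by exact_mod_cast Nat.lt_of_le_of_lt hj.2 (by omega)
    have hNpos : (0 : ℝ) < N := by exact_mod_cast hN
    have hζj : ζ ^ j = Complex.exp (((2 * Real.pi * j / N : ℝ) : ℂ) * Complex.I) := by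
      rw [hζdef, ← Complex.exp_nat_mul]
      congr 1
      push_cast
      ring
    rw [hζj, abs_one_sub_exp (2 * Real.pi * j / N)
      (by positivity)
      (by
        rw [div_le_iff₀ hNpos]
        nlinarith [Real.pi_pos, hjN])]
    congr 1
    ring
  rw [Finset.prod_congr rfl hfin] at habs
  rw [habs]
  simp

lemma S_mul_S (N : ℕ) (hN : 0 < N) (k : ℕ) (hk : k ≤ N - 1) :
    S N k * S N (N - 1 - k) = N := by
  set f : ℕ → ℝ := fun j => 2 * Real.sin (Real.pi * j / N) with hf
  have hrefl : ∀ j, 1 ≤ j → j ≤ N - 1 → f (N - j) = f j := by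
    intro j h1 h2
    have hjN : j ≤ N := by omega
    have hNpos : (0 : ℝ) < N := by exact_mod_cast hN
    simp only [hf]
    congr 1
    rw [show (((N - j : ℕ) : ℝ)) = (N : ℝ) - j by
      push_cast [Nat.cast_sub hjN]; ring]
    rw [show Real.pi * ((N : ℝ) - j) / N = Real.pi - Real.pi * j / N by
      field_simp]
    rw [Real.sin_pi_sub]
  have himg : (Finset.Icc 1 (N - 1 - k)).image (fun j => N - j) = Finset.Icc (k + 1) (N - 1) := by
    ext x
    simp only [Finset.mem_image, Finset.mem_Icc]
    constructor
    · rintro ⟨j, ⟨hj1, hj2⟩, rfl⟩; omega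
    · intro ⟨h1, h2⟩; exact ⟨N - x, by omega, by omega⟩
  have hinj : ∀ a ∈ Finset.Icc 1 (N - 1 - k), ∀ b ∈ Finset.Icc 1 (N - 1 - k),
      N - a = N - b → a = b := by
    intro a ha b hb h
    simp only [Finset.mem_Icc] at ha hb
    omega
  have h2 : S N (N - 1 - k) = ∏ j ∈ Finset.Icc (k + 1) (N - 1), f j := by
    rw [← himg, Finset.prod_image hinj]
    exact Finset.prod_congr rfl fun j hj => by
      simp only [Finset.mem_Icc] at hj
      exact (hrefl j hj.1 (by omega)).symm
  rw [S, h2]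
  rw [show Finset.Icc 1 k = Finset.Ioc 0 k by rw [← Finset.Icc_add_one_left_eq_Ioc, zero_add],
      show Finset.Icc (k + 1) (N - 1) = Finset.Ioc k (N - 1) by rw [← Finset.Icc_add_one_left_eq_Ioc],
      Finset.prod_Ioc_consecutive f (Nat.zero_le k) hk,
      show Finset.Ioc 0 (N - 1) = Finset.Icc 1 (N - 1) by rw [← Finset.Icc_add_one_left_eq_Ioc, zero_add]]
  exact key_prod N hN

lemma S_succ (N a : ℕ) : S N (a + 1) = S N a * (2 * Real.sin (Real.pi * (a + 1) / N)) := by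
  rw [S, S, Finset.prod_Icc_succ_top (by omega)]
  norm_num

lemma prod_Icc_bot {M : Type*} [CommMonoid M] (f : ℤ → M) {a b : ℤ} (h : a ≤ b) :
    ∏ j ∈ Finset.Icc a b, f j = f a * ∏ j ∈ Finset.Icc (a + 1) b, f j := by
  rw [show Finset.Icc a b = insert a (Finset.Icc (a + 1) b) by
    ext x; simp only [Finset.mem_insert, Finset.mem_Icc]; omega]
  rw [Finset.prod_insert (by simp)]

lemma trig' (N : ℝ) (hN : N ≠ 0) (c k : ℝ) :
    (2 * Real.sin (Real.pi * (c + k) / N)) * (2 * Real.sin (Real.pi * (c - k) / N))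
      = 2 * (Real.cos (2 * Real.pi * k / N) - Real.cos (2 * Real.pi * (N - c) / N)) := by
  have h := Real.cos_sub_cos (2 * Real.pi * k / N) (2 * Real.pi * c / N)
  rw [show (2 * Real.pi * k / N + 2 * Real.pi * c / N) / 2 = Real.pi * (c + k) / N by
        field_simp; ring,
      show (2 * Real.pi * k / N - 2 * Real.pi * c / N) / 2 = -(Real.pi * (c - k) / N) by
        field_simp; ring,
      Real.sin_neg] at h
  have h2 : Real.cos (2 * Real.pi * (N - c) / N) = Real.cos (2 * Real.pi * c / N) := by
    rw [show 2 * Real.pi * (N - c) / N = 2 * Real.pi - 2 * Real.pi * c / N by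
      field_simp, Real.cos_two_pi_sub]
  rw [h2, h]; ring

lemma uvec_succ (L : ℕ) (m : ℕ) (k : ℤ) (hk : |k| ≤ 2 * L) :
    uvec L (((m : ℤ) + 1) - L) k = uvec L ((m : ℤ) - L) k *
      ((2 * Real.sin (Real.pi * (2 * L + m + 1 + k) / (4 * L + 1))) *
       (2 * Real.sin (Real.pi * (2 * L + m + 1 - k) / (4 * L + 1)))) := by
  have hk' := abs_le.mp hk
  have e1 : (3 * (L : ℤ) + ((m : ℤ) + 1 - L) + k).toNat
      = (3 * (L : ℤ) + ((m : ℤ) - L) + k).toNat + 1 := by omega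
  have e2 : (3 * (L : ℤ) + ((m : ℤ) + 1 - L) - k).toNat
      = (3 * (L : ℤ) + ((m : ℤ) - L) - k).toNat + 1 := by omega
  have t1 : ((3 * (L : ℤ) + ((m : ℤ) - L) + k).toNat : ℤ) = 2 * L + m + k := by omega
  have t2 : ((3 * (L : ℤ) + ((m : ℤ) - L) - k).toNat : ℤ) = 2 * L + m - k := by omega
  have g1 : (((3 * (L : ℤ) + ((m : ℤ) - L) + k).toNat : ℕ) : ℝ)
      = 2 * (L : ℝ) + m + k := by
    have := congrArg (Int.cast : ℤ → ℝ) t1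
    push_cast at this ⊢
    linarith
  have g2 : (((3 * (L : ℤ) + ((m : ℤ) - L) - k).toNat : ℕ) : ℝ)
      = 2 * (L : ℝ) + m - k := by
    have := congrArg (Int.cast : ℤ → ℝ) t2
    push_cast at this ⊢
    linarith
  rw [uvec, uvec, e1, e2, S_succ, S_succ, g1, g2]
  push_cast
  ring

lemma main_ind (L : ℕ) (m : ℕ) (k : ℤ) (hk : |k| ≤ 2 * L) :
    uvec L ((m : ℤ) - L) k = (4 * (L : ℝ) + 1) * (2 : ℝ) ^ m *
      ∏ j ∈ Finset.Icc (2 * (L : ℤ) - m + 1) (2 * (L : ℤ)),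
        (Real.cos (2 * Real.pi * k / (4 * L + 1)) -
          Real.cos (2 * Real.pi * j / (4 * L + 1))) := by
  have hk' := abs_le.mp hk
  induction m with
  | zero =>
    rw [show ((0 : ℕ) : ℤ) = 0 from rfl]
    rw [Finset.Icc_eq_empty (by omega), Finset.prod_empty]
    have ha : (3 * (L : ℤ) + ((0 : ℤ) - L) + k).toNat ≤ 4 * L + 1 - 1 := by omega
    have hb : (3 * (L : ℤ) + ((0 : ℤ) - L) - k).toNat
        = 4 * L + 1 - 1 - (3 * (L : ℤ) + ((0 : ℤ) - L) + k).toNat := by omega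
    rw [uvec, hb]
    rw [S_mul_S (4 * L + 1) (by omega) _ ha]
    push_cast
    ring
  | succ m ih =>
    have hstep := uvec_succ L m k hk
    rw [show ((m + 1 : ℕ) : ℤ) = (m : ℤ) + 1 by push_cast; ring, hstep, ih]
    have hNne : (4 * (L : ℝ) + 1) ≠ 0 := by positivity
    have ht := trig' (4 * (L : ℝ) + 1) hNne (2 * L + m + 1) (k : ℝ)
    rw [show (4 * (L : ℝ) + 1) - (2 * (L : ℝ) + m + 1) = 2 * (L : ℝ) - m by ring] at ht
    rw [ht]
    rw [show 2 * (L : ℤ) - ((m : ℤ) + 1) + 1 = 2 * (L : ℤ) - m by ring]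
    rw [prod_Icc_bot (fun j => Real.cos (2 * Real.pi * k / (4 * L + 1)) -
          Real.cos (2 * Real.pi * j / (4 * L + 1))) (by omega : 2 * (L : ℤ) - m ≤ 2 * (L : ℤ))]
    push_cast
    ring

theorem stmt9 (L : ℕ) (hL : 1 ≤ L) (n : ℤ) (hn1 : -(L : ℤ) ≤ n) (hn2 : n ≤ L)
    (k : ℤ) (hk : |k| ≤ 2 * L) :
    uvec L n k = (4 * L + 1) * (2 : ℝ) ^ ((L : ℤ) + n) *
      ∏ j ∈ Finset.Icc ((L : ℤ) - n + 1) (2 * (L : ℤ)),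
        (Real.cos (2 * Real.pi * k / (4 * L + 1)) -
          Real.cos (2 * Real.pi * j / (4 * L + 1))) := by
  set m : ℕ := (n + L).toNat with hm
  have hn : n = (m : ℤ) - L := by omega
  rw [hn]
  rw [show (L : ℤ) + ((m : ℤ) - L) = (m : ℤ) by ring, zpow_natCast]
  rw [show (L : ℤ) - ((m : ℤ) - L) + 1 = 2 * (L : ℤ) - m + 1 by ring]
  exact main_ind L m k hk
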